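/- Let q = 2^k, and let g = (1, 2, 4, …, 2^{k-1}) ∈ (ℤ/q)^k be the gadget vector. Suppose y = g·s + e ∈ (ℤ/q)^k for some s ∈ ℤ/q and e ∈ (ℤ/q)^k with every component of e having centered representative in [-q/4, q/4). Then the bit-by-bit rounding algorithm recovers s: iterating for i = k-1 down to 0, maintaining a partial value s' (initialized to 0) and setting the bit 2^{k-1-i} in s' whenever the centered representative of y_i - 2^i·s' lies outside [-q/4, q/4), terminates with s' = s. -/
import Mathlib


/-- The centered representative `x̂ ∈ [-q/2, q/2)` of `x : ZMod q`. -/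
def zCenter (q : ℕ) (x : ZMod q) : ℤ :=
  if (x.val : ℤ) < (q : ℤ) / 2 then (x.val : ℤ) else (x.val : ℤ) - q

/-- The bit-by-bit gadget inversion: after `t` iterations (processing indices
`i = k-1, …, k-t`), `gadgetInv k y t` is the partial value `s'`; at step
`t+1` the bit `2^t` is set whenever the centered representative of
`y_{k-1-t} - 2^{k-1-t}·s'` lies outside `[-q/4, q/4)`. -/
def gadgetInv (k : ℕ) (y : ℕ → ZMod (2 ^ k)) : ℕ → ZMod (2 ^ k)
  | 0 => 0
  | t + 1 =>
    let s := gadgetInv k y t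
    if -(((2 ^ k : ℕ) : ℤ) / 4) ≤ zCenter (2 ^ k) (y (k - 1 - t) - ((2 ^ (k - 1 - t) : ℕ) : ZMod (2 ^ k)) * s) ∧
        zCenter (2 ^ k) (y (k - 1 - t) - ((2 ^ (k - 1 - t) : ℕ) : ZMod (2 ^ k)) * s) < ((2 ^ k : ℕ) : ℤ) / 4
    then s
    else s + ((2 ^ t : ℕ) : ZMod (2 ^ k))

lemma div4 (k : ℕ) (hk : 2 ≤ k) : ((2 ^ k : ℕ) : ℤ) / 4 = 2 ^ (k - 2) := by
  obtain ⟨m, rfl⟩ := Nat.exists_eq_add_of_le hk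
  have h : 2 + m - 2 = m := by omega
  push_cast [h, pow_add]
  ring_nf
  omega

lemma pow_split (k : ℕ) (hk : 1 ≤ k) : (2:ℤ) ^ k = 2 * 2 ^ (k - 1) := by
  obtain ⟨m, rfl⟩ := Nat.exists_eq_add_of_le hk
  have h : 1 + m - 1 = m := by omega
  rw [h, pow_add]; ring

lemma zc_cast (k : ℕ) (x : ZMod (2 ^ k)) :
    ((zCenter (2 ^ k) x : ℤ) : ZMod (2 ^ k)) = x := by
  haveI : NeZero (2 ^ k) := ⟨by positivity⟩
  have h0 : ((2:ZMod (2^k)))^k = 0 := by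
    have := ZMod.natCast_self (2^k); push_cast at this; exact this
  unfold zCenter
  split <;> push_cast <;> simp [ZMod.natCast_val, ZMod.cast_id, h0]

lemma zc_bounds (k : ℕ) (hk : 1 ≤ k) (x : ZMod (2 ^ k)) :
    -(2 ^ (k - 1) : ℤ) ≤ zCenter (2 ^ k) x ∧ zCenter (2 ^ k) x < 2 ^ (k - 1) := by
  haveI : NeZero (2 ^ k) := ⟨by positivity⟩
  have hv : (x.val : ℤ) < 2 ^ k := by exact_mod_cast x.val_lt
  have h2 : ((2 ^ k : ℕ) : ℤ) / 2 = 2 ^ (k - 1) := by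
    have := pow_split k hk; push_cast; omega
  have hkk := pow_split k hk
  unfold zCenter
  rw [h2] at *
  split <;> push_cast at * <;> constructor <;> omega

lemma zc_unique (k : ℕ) (hk : 1 ≤ k) (x : ZMod (2 ^ k)) (z : ℤ)
    (hz : (z : ZMod (2 ^ k)) = x) (h1 : -(2 ^ (k - 1) : ℤ) ≤ z) (h2 : z < 2 ^ (k - 1)) :
    zCenter (2 ^ k) x = z := by
  haveI : NeZero (2 ^ k) := ⟨by positivity⟩
  have hc := zc_cast k x
  have hb := zc_bounds k hk x
  have hd : ((2 ^ k : ℕ) : ℤ) ∣ (zCenter (2 ^ k) x - z) := by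
    rw [← ZMod.intCast_zmod_eq_zero_iff_dvd]
    push_cast
    rw [hc, hz]; ring
  have hkk := pow_split k hk
  have := Int.eq_zero_of_abs_lt_dvd hd (by push_cast; rw [abs_lt]; omega)
  omega

/-- if `y_i = 2^i·s + e_i` with each noise component having
centered representative of absolute value `< q/4`, the bit-by-bit rounding
algorithm terminates with `s` after `k` iterations. -/
theorem stmt_17 (k : ℕ) (hk : 2 ≤ k) (s : ZMod (2 ^ k)) (e : ℕ → ZMod (2 ^ k))
    (he : ∀ i < k, |zCenter (2 ^ k) (e i)| < ((2 ^ k : ℕ) : ℤ) / 4)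
    (y : ℕ → ZMod (2 ^ k))
    (hy : ∀ i < k, y i = ((2 ^ i : ℕ) : ZMod (2 ^ k)) * s + e i) :
    gadgetInv k y k = s := by
  haveI : NeZero (2 ^ k) := ⟨by positivity⟩
  have hk1 : 1 ≤ k := by omega
  have hs : ((s.val : ℕ) : ZMod (2 ^ k)) = s := by simp [ZMod.natCast_val, ZMod.cast_id]
  have key : ∀ t, t ≤ k → gadgetInv k y t = ((s.val % 2 ^ t : ℕ) : ZMod (2 ^ k)) := by
    intro t
    induction t with
    | zero => intro _; simp [gadgetInv, Nat.mod_one]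
    | succ t ih =>
      intro ht
      have IH := ih (by omega)
      have hik : k - 1 - t < k := by omega
      have hit : (k - 1 - t) + t = k - 1 := by omega
      set m := s.val / 2 ^ t with hm
      set b := m % 2 with hb
      -- the expression inside the algorithm
      have key_nat : 2 ^ (k - 1 - t) * s.val
          = 2 ^ (k - 1) * m + 2 ^ (k - 1 - t) * (s.val % 2 ^ t) := by
        have h := Nat.div_add_mod s.val (2 ^ t)
        calc 2 ^ (k - 1 - t) * s.val
            = 2 ^ (k - 1 - t) * (2 ^ t * m + s.val % 2 ^ t) := by rw [hm, h]
          _ = 2 ^ ((k - 1 - t) + t) * m + 2 ^ (k - 1 - t) * (s.val % 2 ^ t) := by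
              rw [pow_add]; ring
          _ = _ := by rw [hit]
      have hmb : ((2 ^ (k - 1) * m : ℕ) : ZMod (2 ^ k)) = ((2 ^ (k - 1) * b : ℕ) : ZMod (2 ^ k)) := by
        have hnat : 2 ^ (k - 1) * m = 2 ^ k * (m / 2) + 2 ^ (k - 1) * b := by
          have hm2 : m = 2 * (m / 2) + b := by omega
          calc 2 ^ (k - 1) * m = 2 ^ (k - 1) * (2 * (m / 2) + b) := by rw [← hm2]
            _ = 2 ^ (k - 1) * 2 * (m / 2) + 2 ^ (k - 1) * b := by ring
            _ = 2 ^ k * (m / 2) + 2 ^ (k - 1) * b := by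
                have hkeq : (k - 1) + 1 = k := by omega
                rw [← pow_succ, hkeq]
        rw [hnat, Nat.cast_add, Nat.cast_mul, ZMod.natCast_self, zero_mul, zero_add]
      have hexpr : y (k - 1 - t) - ((2 ^ (k - 1 - t) : ℕ) : ZMod (2 ^ k)) * gadgetInv k y t
          = ((2 ^ (k - 1) * b : ℕ) : ZMod (2 ^ k)) + e (k - 1 - t) := by
        rw [hy _ hik, IH, ← hmb]
        have hz : ((2 ^ (k - 1 - t) : ℕ) : ZMod (2 ^ k)) * s
            = ((2 ^ (k - 1) * m : ℕ) : ZMod (2 ^ k))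
              + ((2 ^ (k - 1 - t) : ℕ) : ZMod (2 ^ k)) * ((s.val % 2 ^ t : ℕ) : ZMod (2 ^ k)) := by
          conv_lhs => rw [← hs]
          rw [← Nat.cast_mul, key_nat]
          push_cast; ring
        rw [hz]; ring
      have hmod : s.val % 2 ^ (t + 1) = s.val % 2 ^ t + 2 ^ t * b := by
        rw [pow_succ, Nat.mod_mul]
      rw [gadgetInv, hexpr, div4 k hk]
      have heb := he _ hik
      rw [div4 k hk, abs_lt] at heb
      have hp2 : (2:ℤ) ^ (k - 1) = 2 * 2 ^ (k - 2) := by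
        have h := pow_split (k - 1) (by omega)
        have h2 : k - 1 - 1 = k - 2 := by omega
        rw [h, h2]
      rcases Nat.mod_two_eq_zero_or_one m with h0 | h1
      · -- bit is 0
        rw [← hb] at h0
        have : ((2 ^ (k - 1) * b : ℕ) : ZMod (2 ^ k)) + e (k - 1 - t) = e (k - 1 - t) := by
          rw [h0]; simp
        rw [this, if_pos ⟨by omega, heb.2⟩, IH, hmod, h0]
        simp
      · -- bit is 1
        rw [← hb] at h1
        set z : ℤ := if zCenter (2 ^ k) (e (k - 1 - t)) < 0
          then zCenter (2 ^ k) (e (k - 1 - t)) + 2 ^ (k - 1)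
          else zCenter (2 ^ k) (e (k - 1 - t)) - 2 ^ (k - 1) with hzdef
        have hcastz : ((z : ℤ) : ZMod (2 ^ k)) = ((2 ^ (k - 1) * b : ℕ) : ZMod (2 ^ k)) + e (k - 1 - t) := by
          have h2k : ((2:ZMod (2 ^ k))) ^ (k - 1) + (2:ZMod (2 ^ k)) ^ (k - 1) = 0 := by
            have heq : (2:ℕ) ^ (k - 1) + 2 ^ (k - 1) = 2 ^ k := by
              rw [← two_mul, ← pow_succ']; congr 1; omega
            have h0 : ((2 ^ (k - 1) + 2 ^ (k - 1) : ℕ) : ZMod (2 ^ k)) = 0 := by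
              rw [heq]; exact ZMod.natCast_self _
            push_cast at h0; exact h0
          rw [hzdef]
          split
          · push_cast [h1, zc_cast]; ring
          · push_cast [h1, zc_cast]; linear_combination -h2k
        have hzc := zc_unique k hk1 _ z hcastz
          (by rw [hzdef]; split <;> (rw [hp2] at *; omega))
          (by rw [hzdef]; split <;> (rw [hp2] at *; omega))
        rw [hzc, if_neg (by rw [hzdef]; split <;> (rw [hp2] at *; omega) )]
        rw [IH, hmod, h1]
        push_cast; ring
  have := key k le_rfl
  rw [this, Nat.mod_eq_of_lt (ZMod.val_lt s), hs]
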